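/- The Bochner integral T : L¹([0,1)^n; B) → B, T(f) = ∫_{[0,1)^n} f(y) dy, is a continuous ℝ-linear map satisfying: (i) T(f·b) = T(f)·b for all f ∈ L¹([0,1)^n; B) and b ∈ B, where (f·b)(x) = f(x)b; (ii) T(const 1_B) = 1_B, where const 1_B is the constant function with value the unit of B; and (iii) T(Γ((f_σ)_σ)) = 2^{-n} ∑_{σ∈{0,1}^n} T(f_σ) for every 2^n-tuple (f_σ)_σ. Moreover, T is the unique continuous ℝ-linear map L¹([0,1)^n; B) → B satisfying (i), (ii) and (iii). -/

import Mathlib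

open MeasureTheory

/-- Lebesgue measure restricted to the half-open unit cube `[0,1)^n`. -/
noncomputable def cubeMeasure (n : ℕ) : Measure (Fin n → ℝ) :=
  volume.restrict (Set.univ.pi fun _ => Set.Ico (0:ℝ) 1)

/-- The juxtaposition of a `2^n`-tuple of functions: on the subcube `C_σ` indexed by
`σ ∈ {0,1}^n` it takes the value `f_σ(2y − σ)`. -/
noncomputable def juxtFun {n : ℕ} {B : Type*} (F : (Fin n → Bool) → (Fin n → ℝ) → B)
    (y : Fin n → ℝ) : B :=
  F (fun j => if (1/2 : ℝ) ≤ y j then true else false)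
    (fun j => 2 * y j - (if (1/2 : ℝ) ≤ y j then 1 else 0))

open Set
open scoped ENNReal
set_option linter.unusedVariables false
set_option linter.unusedSectionVars false

variable {n : ℕ}

def cube (n : ℕ) : Set (Fin n → ℝ) := Set.univ.pi fun _ => Set.Ico (0:ℝ) 1

lemma measurableSet_cube : MeasurableSet (cube n) :=
  MeasurableSet.univ_pi fun _ => measurableSet_Ico

lemma cubeMeasure_def : cubeMeasure n = volume.restrict (cube n) := rfl

lemma volume_cube : volume (cube n) = 1 := by
  rw [cube, volume_pi_pi]
  simp [Real.volume_Ico]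

lemma cubeMeasure_univ : cubeMeasure n Set.univ = 1 := by
  rw [cubeMeasure_def, Measure.restrict_apply_univ, volume_cube]

instance : IsProbabilityMeasure (cubeMeasure n) := ⟨cubeMeasure_univ⟩

lemma ae_mem_cube : ∀ᵐ x ∂(cubeMeasure n), x ∈ cube n :=
  ae_restrict_mem measurableSet_cube

/-! σ-cubes -/

noncomputable def sv (σ : Fin n → Bool) : Fin n → ℝ := fun j => if σ j then 1 else 0

noncomputable def Csig (σ : Fin n → Bool) : Set (Fin n → ℝ) :=
  Set.univ.pi fun j => Set.Ico (sv σ j / 2) ((sv σ j + 1) / 2)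

noncomputable def phi (σ : Fin n → Bool) (y : Fin n → ℝ) : Fin n → ℝ :=
  fun j => 2 * y j - sv σ j

noncomputable def pat (y : Fin n → ℝ) : Fin n → Bool := fun j => if (1/2 : ℝ) ≤ y j then true else false

lemma juxtFun_eq {B : Type*} (F : (Fin n → Bool) → (Fin n → ℝ) → B) (y : Fin n → ℝ) :
    juxtFun F y = F (pat y) (phi (pat y) y) := by
  have : (fun j => 2 * y j - (if (1/2 : ℝ) ≤ y j then 1 else 0)) = phi (pat y) y := by
    funext j
    simp only [phi, sv, pat]
    split <;> simp
  rw [juxtFun, this]; rfl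

lemma measurableSet_Csig (σ : Fin n → Bool) : MeasurableSet (Csig σ) :=
  MeasurableSet.univ_pi fun _ => measurableSet_Ico

lemma measurable_phi (σ : Fin n → Bool) : Measurable (phi σ) :=
  measurable_pi_lambda _ fun j => ((measurable_pi_apply j).const_mul 2).sub measurable_const

lemma pat_eq_of_mem_Csig {σ : Fin n → Bool} {y : Fin n → ℝ} (hy : y ∈ Csig σ) : pat y = σ := by
  funext j
  have hj := hy j (Set.mem_univ j)
  simp only [Set.mem_Ico] at hj
  simp only [pat, sv] at hj ⊢
  cases hσ : σ j
  · simp only [hσ] at hj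
    norm_num at hj ⊢
    exact hj.2
  · simp only [hσ] at hj
    norm_num at hj ⊢
    exact hj.1


lemma Csig_subset_cube (σ : Fin n → Bool) : Csig σ ⊆ cube n := by
  intro y hy j _
  have hj := hy j (Set.mem_univ j)
  simp only [Set.mem_Ico, sv] at hj ⊢
  constructor
  · cases hσ : σ j <;> simp [hσ] at hj <;> linarith [hj.1]
  · cases hσ : σ j <;> simp [hσ] at hj <;> linarith [hj.2]

lemma mem_Csig_pat {y : Fin n → ℝ} (hy : y ∈ cube n) : y ∈ Csig (pat y) := by
  intro j _
  have hj := hy j (Set.mem_univ j)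
  simp only [Set.mem_Ico] at hj
  simp only [Set.mem_Ico, sv, pat]
  by_cases h : (1/2 : ℝ) ≤ y j
  · simp only [if_pos h, if_pos rfl, if_true]
    constructor <;> linarith [hj.1, hj.2]
  · simp only [if_neg h]
    norm_num
    push_neg at h
    constructor <;> linarith [hj.1, hj.2]

lemma cube_eq_iUnion : cube n = ⋃ σ, Csig σ := by
  apply Set.Subset.antisymm
  · intro y hy
    exact Set.mem_iUnion.2 ⟨pat y, mem_Csig_pat hy⟩
  · exact Set.iUnion_subset Csig_subset_cube

lemma disjoint_Csig : Pairwise (Function.onFun Disjoint (Csig (n := n))) := by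
  intro σ τ hστ
  rw [Function.onFun, Set.disjoint_left]
  intro y hyσ hyτ
  exact hστ ((pat_eq_of_mem_Csig hyσ).symm.trans (pat_eq_of_mem_Csig hyτ))

lemma phi_preimage_cube (σ : Fin n → Bool) : phi σ ⁻¹' (cube n) = Csig σ := by
  ext y
  simp only [Set.mem_preimage, cube, Csig, Set.mem_pi, Set.mem_univ, forall_true_left,
    Set.mem_Ico, phi]
  constructor
  · intro h j
    have := h j
    exact ⟨by linarith [this.1], by linarith [this.2]⟩
  · intro h j
    have := h j
    exact ⟨by linarith [this.1], by linarith [this.2]⟩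


lemma map_smul2_volume :
    Measure.map (fun y : Fin n → ℝ => (2:ℝ) • y) volume = ((2:ℝ≥0∞)^n)⁻¹ • volume := by
  have h := Real.map_linearMap_volume_pi_eq_smul_volume_pi
    (f := (2:ℝ) • (LinearMap.id : (Fin n → ℝ) →ₗ[ℝ] (Fin n → ℝ))) (by
      rw [LinearMap.det_smul, LinearMap.det_id, Module.finrank_fin_fun]
      positivity)
  have h2 : ⇑((2:ℝ) • (LinearMap.id : (Fin n → ℝ) →ₗ[ℝ] (Fin n → ℝ)))
      = fun y : Fin n → ℝ => (2:ℝ) • y := by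
    funext y; simp
  rw [h2] at h
  rw [h]
  congr 1
  rw [LinearMap.det_smul, LinearMap.det_id, Module.finrank_fin_fun, mul_one]
  rw [abs_of_nonneg (by positivity)]
  rw [ENNReal.ofReal_inv_of_pos (by positivity), ENNReal.ofReal_pow (by norm_num)]
  norm_num

lemma map_add_neg_volume (c : Fin n → ℝ) :
    Measure.map (fun y : Fin n → ℝ => y - c) volume = volume := by
  simpa [sub_eq_add_neg] using (measurePreserving_add_right (volume : Measure (Fin n → ℝ)) (-c)).map_eq

lemma map_phi_volume (σ : Fin n → Bool) :
    Measure.map (phi σ) volume = ((2:ℝ≥0∞)^n)⁻¹ • volume := by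
  have hcomp : phi σ = (fun y : Fin n → ℝ => y - sv σ) ∘ (fun y : Fin n → ℝ => (2:ℝ) • y) := by
    funext y j
    simp [phi, Pi.smul_apply, smul_eq_mul, Pi.sub_apply]
  have hm2 : Measurable (fun y : Fin n → ℝ => (2:ℝ) • y) := by
    exact (measurable_id.const_smul (2:ℝ))
  rw [hcomp, ← Measure.map_map (by measurability) hm2, map_smul2_volume,
    Measure.map_smul, map_add_neg_volume]

lemma map_phi_restrict (σ : Fin n → Bool) :
    Measure.map (phi σ) (volume.restrict (Csig σ)) = ((2:ℝ≥0∞)^n)⁻¹ • cubeMeasure n := by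
  rw [← phi_preimage_cube σ, ← Measure.restrict_map (measurable_phi σ) measurableSet_cube,
    map_phi_volume, cubeMeasure_def, Measure.restrict_smul]

lemma comp_phi_ae_eq {B : Type*} [TopologicalSpace B] {g₁ g₂ : (Fin n → ℝ) → B}
    (σ : Fin n → Bool) (h : g₁ =ᵐ[cubeMeasure n] g₂) :
    g₁ ∘ (phi σ) =ᵐ[volume.restrict (Csig σ)] g₂ ∘ (phi σ) := by
  apply ae_eq_comp (measurable_phi σ).aemeasurable
  rw [map_phi_restrict]
  exact h.filter_mono (Measure.absolutelyContinuous_of_le_smul (c := ((2:ℝ≥0∞)^n)⁻¹) le_rfl).ae_le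

section Integral
variable {B : Type*} [NormedAddCommGroup B] [NormedSpace ℝ B]

lemma smul_ac : ((2:ℝ≥0∞)^n)⁻¹ • cubeMeasure n ≪ cubeMeasure n :=
  Measure.absolutelyContinuous_of_le_smul (c := ((2:ℝ≥0∞)^n)⁻¹) le_rfl

lemma setIntegral_comp_phi [CompleteSpace B] (σ : Fin n → Bool) (g : (Fin n → ℝ) → B)
    (hg : AEStronglyMeasurable g (cubeMeasure n)) :
    ∫ y in Csig σ, g (phi σ y) = ((2:ℝ)^n)⁻¹ • ∫ y, g y ∂(cubeMeasure n) := by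
  have h1 : AEStronglyMeasurable g (Measure.map (phi σ) (volume.restrict (Csig σ))) := by
    rw [map_phi_restrict]; exact hg.mono_ac smul_ac
  have := integral_map (φ := phi σ) (μ := volume.restrict (Csig σ))
    (measurable_phi σ).aemeasurable h1
  rw [map_phi_restrict, integral_smul_measure] at this
  rw [← this]
  congr 1
  simp [ENNReal.toReal_inv]

end Integral

lemma juxtFun_eq_on_Csig {B : Type*} (F : (Fin n → Bool) → (Fin n → ℝ) → B)
    (σ : Fin n → Bool) {y : Fin n → ℝ} (hy : y ∈ Csig σ) :
    juxtFun F y = F σ (phi σ y) := by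
  rw [juxtFun_eq, pat_eq_of_mem_Csig hy]

lemma juxtFun_ae_congr {B : Type*} {F G : (Fin n → Bool) → (Fin n → ℝ) → B}
    (hFG : ∀ σ, F σ =ᵐ[cubeMeasure n] G σ) :
    juxtFun F =ᵐ[cubeMeasure n] juxtFun G := by
  have key : ∀ σ : Fin n → Bool,
      volume ({y | juxtFun F y ≠ juxtFun G y} ∩ Csig σ) = 0 := by
    intro σ
    have h1 : (F σ) ∘ (phi σ) =ᵐ[volume.restrict (Csig σ)] (G σ) ∘ (phi σ) := by
      apply ae_eq_comp (measurable_phi σ).aemeasurable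
      rw [map_phi_restrict]
      exact (hFG σ).filter_mono smul_ac.ae_le
    have h2 : volume.restrict (Csig σ) {y | (F σ ∘ phi σ) y ≠ (G σ ∘ phi σ) y} = 0 := h1
    rw [Measure.restrict_apply' (measurableSet_Csig σ)] at h2
    refine measure_mono_null ?_ h2
    intro y ⟨hy1, hy2⟩
    refine ⟨?_, hy2⟩
    simp only [Set.mem_setOf_eq, Function.comp_apply] at hy1 ⊢
    rw [juxtFun_eq_on_Csig F σ hy2, juxtFun_eq_on_Csig G σ hy2] at hy1
    exact hy1
  have : cubeMeasure n {y | juxtFun F y ≠ juxtFun G y} = 0 := by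
    rw [cubeMeasure_def, Measure.restrict_apply' measurableSet_cube]
    refine measure_mono_null (fun y ⟨hy1, hy2⟩ => ?_) (measure_iUnion_null key)
    rw [cube_eq_iUnion] at hy2
    obtain ⟨s, ⟨σ, rfl⟩, hyσ⟩ := hy2
    exact Set.mem_iUnion.2 ⟨σ, hy1, hyσ⟩
  exact this

lemma integral_juxt {B : Type*} [NormedAddCommGroup B] [NormedSpace ℝ B] [CompleteSpace B]
    (F : (Fin n → Bool) → (Fin n → ℝ) → B)
    (hmeas : ∀ σ, AEStronglyMeasurable (F σ) (cubeMeasure n))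
    (hint : Integrable (juxtFun F) (cubeMeasure n)) :
    ∫ y, juxtFun F y ∂(cubeMeasure n)
      = ((2:ℝ)^n)⁻¹ • ∑ σ : Fin n → Bool, ∫ y, F σ y ∂(cubeMeasure n) := by
  have h0 : ∫ y, juxtFun F y ∂(cubeMeasure n) = ∫ y in ⋃ σ, Csig σ, juxtFun F y ∂volume := by
    rw [cubeMeasure_def, cube_eq_iUnion]
  rw [h0, integral_iUnion measurableSet_Csig disjoint_Csig
    (by rw [← cube_eq_iUnion]; exact hint), tsum_fintype]
  rw [Finset.smul_sum]
  apply Finset.sum_congr rfl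
  intro σ _
  rw [setIntegral_congr_fun (measurableSet_Csig σ)
    (fun y hy => juxtFun_eq_on_Csig F σ hy)]
  exact setIntegral_comp_phi σ (F σ) (hmeas σ)

section Main
variable {B : Type*} [NormedRing B] [NormedAlgebra ℝ B] [CompleteSpace B]

lemma T_eq (f : Lp B 1 (cubeMeasure n)) :
    L1.integralCLM f = ∫ x, f x ∂(cubeMeasure n) := by
  rw [← L1.integral_eq, L1.integral_eq_integral]

lemma T_prop1 (f g : Lp B 1 (cubeMeasure n)) (b : B)
    (h : ⇑g =ᵐ[cubeMeasure n] fun x => f x * b) :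
    (L1.integralCLM g : B) = L1.integralCLM f * b := by
  rw [T_eq, T_eq, integral_congr_ae h]
  have := ((ContinuousLinearMap.mul ℝ B).flip b).integral_comp_comm (L1.integrable_coeFn f)
  simpa using this

lemma T_prop2 (one : Lp B 1 (cubeMeasure n))
    (h : ⇑one =ᵐ[cubeMeasure n] fun _ => (1 : B)) :
    (L1.integralCLM one : B) = 1 := by
  rw [T_eq, integral_congr_ae h, integral_const, probReal_univ]
  simp

lemma T_prop3 (F : (Fin n → Bool) → Lp B 1 (cubeMeasure n)) (h : Lp B 1 (cubeMeasure n))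
    (hh : ⇑h =ᵐ[cubeMeasure n] juxtFun (fun σ => ⇑(F σ))) :
    (L1.integralCLM h : B) = ((2 : ℝ) ^ n)⁻¹ • ∑ σ : Fin n → Bool, (L1.integralCLM (F σ) : B) := by
  rw [T_eq, integral_congr_ae hh,
    integral_juxt _ (fun σ => Lp.aestronglyMeasurable (F σ))
      ((L1.integrable_coeFn h).congr hh)]
  congr 1
  exact Finset.sum_congr rfl fun σ _ => (T_eq (F σ)).symm

end Main


/-- 1-d arithmetic: half-interval correspondence. -/
lemma interval_half (a s p y : ℝ) (hp : 0 < p) :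
    (a / p ≤ 2*y - s ∧ 2*y - s < (a+1)/p) ↔
      ((a + p*s) / (2*p) ≤ y ∧ y < (a + p*s + 1)/(2*p)) := by
  rw [div_le_iff₀ hp, lt_div_iff₀ hp, div_le_iff₀ (by positivity), lt_div_iff₀ (by positivity)]
  constructor <;> rintro ⟨h1, h2⟩ <;> constructor <;> nlinarith

/-- 1-d dyadic nesting. -/
lemma dyadic_nested {k l m p : ℕ} (hkl : k ≤ l) {x : ℝ}
    (hx1 : (m:ℝ)/2^k ≤ x) (hx2 : x < ((m:ℝ)+1)/2^k)
    (hx3 : (p:ℝ)/2^l ≤ x) (hx4 : x < ((p:ℝ)+1)/2^l)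
    {w : ℝ} (hw1 : (p:ℝ)/2^l ≤ w) (hw2 : w < ((p:ℝ)+1)/2^l) :
    (m:ℝ)/2^k ≤ w ∧ w < ((m:ℝ)+1)/2^k := by
  obtain ⟨e, rfl⟩ : ∃ e, l = k + e := ⟨l - k, by omega⟩
  have h2l : (2:ℝ)^(k+e) = 2^k * 2^e := pow_add 2 k e
  have hk : (0:ℝ) < 2^k := by positivity
  have he : (0:ℝ) < 2^e := by positivity
  have key : ∀ a : ℕ, ((a:ℝ) * 2^e)/2^(k+e) = (a:ℝ)/2^k := by
    intro a
    rw [h2l]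
    field_simp
  have key1 : ∀ a : ℕ, (((a:ℝ)+1) * 2^e)/2^(k+e) = ((a:ℝ)+1)/2^k := by
    intro a
    rw [h2l]
    field_simp
  have h1 : (m:ℝ) * 2^e ≤ p := by
    by_contra hc
    push_neg at hc
    have hn : p < m * 2^e := by exact_mod_cast hc
    have hr : (p:ℝ) + 1 ≤ (m:ℝ) * 2^e := by
      have h' : p + 1 ≤ m * 2^e := hn
      exact_mod_cast h'
    have : x < (m:ℝ)/2^k := by
      refine lt_of_lt_of_le hx4 ?_
      rw [← key m]
      gcongr
    linarith
  have h2 : (p:ℝ) + 1 ≤ ((m:ℝ)+1) * 2^e := by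
    by_contra hc
    push_neg at hc
    have hn : (m+1) * 2^e < p + 1 := by exact_mod_cast hc
    have hr : ((m:ℝ)+1) * 2^e ≤ p := by
      have h' : (m+1) * 2^e ≤ p := by omega
      exact_mod_cast h'
    have : ((m:ℝ)+1)/2^k ≤ x := by
      refine le_trans ?_ hx3
      rw [← key1 m]
      gcongr
    linarith
  constructor
  · calc (m:ℝ)/2^k = ((m:ℝ) * 2^e)/2^(k+e) := (key m).symm
      _ ≤ (p:ℝ)/2^(k+e) := by gcongr
      _ ≤ w := hw1
  · calc w < ((p:ℝ)+1)/2^(k+e) := hw2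
      _ ≤ (((m:ℝ)+1) * 2^e)/2^(k+e) := by gcongr
      _ = ((m:ℝ)+1)/2^k := key1 m

/-! dyadic cubes -/
variable {n : ℕ}

def dyQ (k : ℕ) (m : Fin n → ℕ) : Set (Fin n → ℝ) :=
  Set.univ.pi fun j => Set.Ico ((m j : ℝ)/2^k) (((m j : ℝ)+1)/2^k)

lemma measurableSet_dyQ (k : ℕ) (m : Fin n → ℕ) : MeasurableSet (dyQ k m) :=
  MeasurableSet.univ_pi fun _ => measurableSet_Ico

lemma dyQ_zero : dyQ 0 (fun _ : Fin n => 0) = cube n := by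
  unfold dyQ cube
  norm_num

def dyFam (n : ℕ) : Set (Set (Fin n → ℝ)) := {s | ∃ k m, s = dyQ k m}

lemma countable_dyFam : (dyFam n).Countable := by
  have : dyFam n ⊆ Set.range (fun km : ℕ × (Fin n → ℕ) => dyQ km.1 km.2) := by
    rintro s ⟨k, m, rfl⟩
    exact ⟨(k, m), rfl⟩
  exact (Set.countable_range _).mono this

lemma dyQ_subset (k l : ℕ) (m p : Fin n → ℕ) (hkl : k ≤ l)
    {x : Fin n → ℝ} (hx1 : x ∈ dyQ k m) (hx2 : x ∈ dyQ l p) : dyQ l p ⊆ dyQ k m := by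
  intro w hw j _
  have h1 := hx1 j (Set.mem_univ j)
  have h2 := hx2 j (Set.mem_univ j)
  have h3 := hw j (Set.mem_univ j)
  simp only [Set.mem_Ico] at h1 h2 h3 ⊢
  exact dyadic_nested hkl h1.1 h1.2 h2.1 h2.2 h3.1 h3.2

lemma isPiSystem_dyFam : IsPiSystem (dyFam n) := by
  rintro s ⟨k, m, rfl⟩ t ⟨l, p, rfl⟩ ⟨x, hx1, hx2⟩
  rcases le_total k l with hkl | hlk
  · have := dyQ_subset k l m p hkl hx1 hx2
    rw [Set.inter_eq_right.2 this]
    exact ⟨l, p, rfl⟩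
  · have := dyQ_subset l k p m hlk hx2 hx1
    rw [Set.inter_eq_left.2 this]
    exact ⟨k, m, rfl⟩

lemma dyQ_subset_cube {k : ℕ} {m : Fin n → ℕ} (hm : ∀ j, m j < 2^k) :
    dyQ k m ⊆ cube n := by
  intro x hx j _
  have h := hx j (Set.mem_univ j)
  simp only [Set.mem_Ico] at h ⊢
  have hk : (0:ℝ) < 2^k := by positivity
  constructor
  · refine le_trans ?_ h.1
    positivity
  · refine lt_of_lt_of_le h.2 ?_
    rw [div_le_one hk]
    have : (m j : ℝ) + 1 ≤ 2^k := by exact_mod_cast hm j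
    exact this

lemma dyQ_inter_cube_empty {k : ℕ} {m : Fin n → ℕ} (j : Fin n) (hj : 2^k ≤ m j) :
    dyQ k m ∩ cube n = ∅ := by
  ext x
  simp only [Set.mem_inter_iff, Set.mem_empty_iff_false, iff_false]
  rintro ⟨hx1, hx2⟩
  have h1 := hx1 j (Set.mem_univ j)
  have h2 := hx2 j (Set.mem_univ j)
  simp only [Set.mem_Ico] at h1 h2
  have hk : (0:ℝ) < 2^k := by positivity
  have : (1:ℝ) ≤ (m j : ℝ)/2^k := by
    rw [le_div_iff₀ hk]
    have : (2:ℝ)^k ≤ (m j : ℝ) := by exact_mod_cast hj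
    linarith
  linarith [h1.1, h2.2]

/-! successor-level dyadic decomposition -/

def sigOf (k : ℕ) (m : Fin n → ℕ) : Fin n → Bool := fun j => decide (2^k ≤ m j)

def mOf (k : ℕ) (m : Fin n → ℕ) : Fin n → ℕ := fun j => m j - (if 2^k ≤ m j then 2^k else 0)

lemma mOf_lt {k : ℕ} {m : Fin n → ℕ} (hm : ∀ j, m j < 2^(k+1)) : ∀ j, mOf k m j < 2^k := by
  intro j
  have := hm j
  unfold mOf
  by_cases h : 2^k ≤ m j <;> simp [h] <;> [skip; omega]
  have : m j < 2^(k+1) := hm j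
  have h2 : 2^(k+1) = 2^k + 2^k := by ring
  omega

lemma mOf_cast {k : ℕ} {m : Fin n → ℕ} (j : Fin n) :
    (mOf k m j : ℝ) + 2^k * sv (sigOf k m) j = m j := by
  unfold mOf sv sigOf
  by_cases h : 2^k ≤ m j
  · simp only [h, if_pos, decide_eq_true_eq, if_true]
    push_cast [Nat.cast_sub h]
    ring
  · simp only [decide_eq_true_eq]
    rw [if_neg h, if_neg h]
    norm_num

lemma phi_preimage_dyQ {k : ℕ} {m : Fin n → ℕ} :
    phi (sigOf k m) ⁻¹' dyQ k (mOf k m) = dyQ (k+1) m := by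
  ext y
  simp only [Set.mem_preimage, dyQ, Set.mem_pi, Set.mem_univ, forall_true_left, Set.mem_Ico, phi]
  have hk : (0:ℝ) < 2^k := by positivity
  constructor
  · intro h j
    have := (interval_half (mOf k m j : ℝ) (sv (sigOf k m) j) (2^k) (y j) hk).1 (h j)
    rw [mOf_cast j] at this
    have h2 : (2:ℝ) * 2^k = 2^(k+1) := by ring
    rw [h2] at this
    exact this
  · intro h j
    refine (interval_half (mOf k m j : ℝ) (sv (sigOf k m) j) (2^k) (y j) hk).2 ?_
    rw [mOf_cast j]
    have h2 : (2:ℝ) * 2^k = 2^(k+1) := by ring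
    rw [h2]
    exact h j

lemma dyQ_subset_Csig {k : ℕ} {m : Fin n → ℕ} (hm : ∀ j, m j < 2^(k+1)) :
    dyQ (k+1) m ⊆ Csig (sigOf k m) := by
  intro y hy j _
  have h := hy j (Set.mem_univ j)
  simp only [Set.mem_Ico] at h ⊢
  have hk : (0:ℝ) < 2^(k+1) := by positivity
  simp only [sv, sigOf, decide_eq_true_eq]
  by_cases hj : 2^k ≤ m j
  · rw [if_pos hj]
    have h1 : (2:ℝ)^k ≤ (m j : ℝ) := by exact_mod_cast hj
    have h2 : (m j : ℝ) + 1 ≤ 2^(k+1) := by exact_mod_cast hm j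
    constructor
    · refine le_trans ?_ h.1
      rw [le_div_iff₀ hk]
      rw [show (2:ℝ)^(k+1) = 2 * 2^k by ring]
      linarith
    · refine lt_of_lt_of_le h.2 ?_
      rw [div_le_div_iff₀ hk (by norm_num)]
      linarith
  · rw [if_neg hj]
    push_neg at hj
    have h1 : (m j : ℝ) + 1 ≤ 2^k := by exact_mod_cast hj
    constructor
    · refine le_trans ?_ h.1
      have : (0:ℝ) ≤ (m j : ℝ) := Nat.cast_nonneg _
      have h0 : (0:ℝ) / 2 = 0 := by norm_num
      rw [h0]
      positivity
    · refine lt_of_lt_of_le h.2 ?_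
      rw [div_le_div_iff₀ hk (by norm_num)]
      rw [show (2:ℝ)^(k+1) = 2 * 2^k by ring]
      linarith

lemma juxt_indicator_eq {B : Type*} [Zero B] {k : ℕ} {m : Fin n → ℕ}
    (hm : ∀ j, m j < 2^(k+1)) (b : B) :
    juxtFun (fun σ' => if σ' = sigOf k m
        then Set.indicator (dyQ k (mOf k m)) (fun _ => b) else 0)
      = Set.indicator (dyQ (k+1) m) (fun _ => b) := by
  funext y
  rw [juxtFun_eq]
  by_cases hp : pat y = sigOf k m
  · rw [hp, if_pos rfl]
    by_cases hmem : phi (sigOf k m) y ∈ dyQ k (mOf k m)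
    · rw [Set.indicator_of_mem hmem, Set.indicator_of_mem]
      rw [← phi_preimage_dyQ]
      exact hmem
    · rw [Set.indicator_of_notMem hmem, Set.indicator_of_notMem]
      rw [← phi_preimage_dyQ]
      exact hmem
  · rw [if_neg hp]
    rw [Set.indicator_of_notMem]
    · rfl
    · intro hy
      exact hp (pat_eq_of_mem_Csig (dyQ_subset_Csig hm hy))

section Uniq
variable {B : Type*} [NormedRing B] [NormedAlgebra ℝ B] [CompleteSpace B]
variable (D : Lp B 1 (cubeMeasure n) →L[ℝ] B)

lemma indLp_eq_zero {t : Set (Fin n → ℝ)} (ht : MeasurableSet t)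
    (hμ : cubeMeasure n t ≠ ⊤) (h0 : cubeMeasure n t = 0) (b : B) :
    (indicatorConstLp 1 ht hμ b : Lp B 1 (cubeMeasure n)) = 0 := by
  apply Lp.ext
  refine (indicatorConstLp_coeFn).trans ?_
  have hae : ∀ᵐ x ∂(cubeMeasure n), x ∉ t := by
    rw [ae_iff]
    simpa using h0
  refine (Filter.EventuallyEq.trans ?_ (Lp.coeFn_zero B 1 (cubeMeasure n)).symm)
  filter_upwards [hae] with x hx
  simp [Set.indicator_of_notMem hx]

lemma D_dyQ
    (hDc : ∀ (g : Lp B 1 (cubeMeasure n)) (b : B),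
      ⇑g =ᵐ[cubeMeasure n] (fun _ => b) → D g = 0)
    (hDj : ∀ (F : (Fin n → Bool) → Lp B 1 (cubeMeasure n)) (h : Lp B 1 (cubeMeasure n)),
      ⇑h =ᵐ[cubeMeasure n] juxtFun (fun σ => ⇑(F σ)) →
        D h = ((2:ℝ)^n)⁻¹ • ∑ σ : Fin n → Bool, D (F σ)) :
    ∀ (k : ℕ) (m : Fin n → ℕ), (∀ j, m j < 2^k) → ∀ b : B,
      D (indicatorConstLp 1 (measurableSet_dyQ k m) (measure_ne_top _ _) b) = 0 := by
  intro k
  induction k with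
  | zero =>
    intro m hm b
    apply hDc _ b
    refine (indicatorConstLp_coeFn).trans ?_
    have hQ : dyQ 0 m = cube n := by
      have : m = fun _ => 0 := funext fun j => by have := hm j; omega
      rw [this, dyQ_zero]
    rw [hQ]
    filter_upwards [ae_mem_cube] with x hx
    simp [Set.indicator_of_mem hx]
  | succ k ih =>
    intro m hm b
    set σ := sigOf k m with hσ
    set F : (Fin n → Bool) → Lp B 1 (cubeMeasure n) := fun σ' =>
      if σ' = σ then
        indicatorConstLp 1 (measurableSet_dyQ k (mOf k m)) (measure_ne_top _ _) b
      else 0 with hF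
    have hhyp : ⇑(indicatorConstLp 1 (measurableSet_dyQ (k+1) m) (measure_ne_top _ _) b
        : Lp B 1 (cubeMeasure n)) =ᵐ[cubeMeasure n] juxtFun (fun σ' => ⇑(F σ')) := by
      refine (indicatorConstLp_coeFn).trans ?_
      rw [← juxt_indicator_eq hm b]
      apply (juxtFun_ae_congr (fun σ' => ?_)).symm
      by_cases hσ' : σ' = σ
      · subst hσ'
        simp only [hF, ← hσ, if_pos rfl]
        exact indicatorConstLp_coeFn
      · simp only [hF, ← hσ, if_neg hσ']
        exact Lp.coeFn_zero B 1 (cubeMeasure n)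
    rw [hDj F _ hhyp]
    rw [Finset.sum_eq_single σ]
    · simp only [hF, if_pos rfl]
      rw [ih (mOf k m) (mOf_lt hm) b, smul_zero]
    · intro σ' _ hσ'
      simp only [hF, if_neg hσ', map_zero]
    · intro habs
      exact absurd (Finset.mem_univ σ) habs

end Uniq

/-! generation of Borel-inside-cube by dyadic cubes -/

lemma cube_mem_dyFam : cube n ∈ dyFam n := ⟨0, fun _ => 0, dyQ_zero.symm⟩

lemma open_inter_cube {U : Set (Fin n → ℝ)} (hU : IsOpen U) :
    MeasurableSet[MeasurableSpace.generateFrom (dyFam n)] (U ∩ cube n) := by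
  have hrep : U ∩ cube n = ⋃₀ {Q | Q ∈ dyFam n ∧ Q ⊆ U ∩ cube n} := by
    apply Set.Subset.antisymm
    · rintro y ⟨hyU, hyc⟩
      obtain ⟨ε, hε, hball⟩ := Metric.isOpen_iff.1 hU y hyU
      obtain ⟨k, hk⟩ := exists_pow_lt_of_lt_one hε (by norm_num : (1:ℝ)/2 < 1)
      have hk' : (1:ℝ)/2^k < ε := by
        rw [div_pow, one_pow] at hk
        exact hk
      set m : Fin n → ℕ := fun j => ⌊y j * 2^k⌋₊ with hm
      have h2k : (0:ℝ) < 2^k := by positivity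
      have hy0 : ∀ j, 0 ≤ y j := fun j => (hyc j (Set.mem_univ j)).1
      have hy1 : ∀ j, y j < 1 := fun j => (hyc j (Set.mem_univ j)).2
      have hymem : y ∈ dyQ k m := by
        intro j _
        simp only [Set.mem_Ico]
        constructor
        · rw [div_le_iff₀ h2k]
          exact Nat.floor_le (mul_nonneg (hy0 j) h2k.le)
        · rw [lt_div_iff₀ h2k]
          exact Nat.lt_floor_add_one _
      have hQsub : dyQ k m ⊆ U ∩ cube n := by
        intro x hx
        have hd : dist x y < ε := by
          rw [dist_pi_lt_iff hε]
          intro j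
          have h1 := hx j (Set.mem_univ j)
          have h2 := hymem j (Set.mem_univ j)
          simp only [Set.mem_Ico] at h1 h2
          rw [Real.dist_eq, abs_sub_lt_iff]
          have hgap : ((m j : ℝ)+1)/2^k - (m j : ℝ)/2^k = 1/2^k := by
            field_simp
            ring
          constructor <;> linarith [h1.1, h1.2, h2.1, h2.2]
        refine ⟨hball hd, ?_⟩
        refine dyQ_subset_cube (fun j => ?_) hx
        exact (Nat.floor_lt (mul_nonneg (hy0 j) h2k.le)).2 (by push_cast; nlinarith [hy1 j, h2k])
      exact ⟨dyQ k m, ⟨⟨k, m, rfl⟩, hQsub⟩, hymem⟩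
    · rintro y ⟨Q, ⟨_, hQsub⟩, hyQ⟩
      exact hQsub hyQ
  rw [hrep]
  refine MeasurableSet.sUnion (countable_dyFam.mono (fun Q hQ => hQ.1)) ?_
  rintro Q ⟨hQ, _⟩
  exact MeasurableSpace.measurableSet_generateFrom hQ

lemma borel_inter_cube {A : Set (Fin n → ℝ)} (hA : MeasurableSet A) :
    MeasurableSet[MeasurableSpace.generateFrom (dyFam n)] (A ∩ cube n) := by
  have hA' : MeasurableSet[MeasurableSpace.generateFrom {s : Set (Fin n → ℝ) | IsOpen s}] A := by
    rwa [BorelSpace.measurable_eq (α := Fin n → ℝ)] at hA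
  refine MeasurableSpace.generateFrom_induction
    (p := fun s _ => MeasurableSet[MeasurableSpace.generateFrom (dyFam n)] (s ∩ cube n))
    _ (fun t ht _ => open_inter_cube ht) (by simp) ?_ ?_ A hA'
  · intro t _ hind
    have : tᶜ ∩ cube n = cube n \ (t ∩ cube n) := by
      ext x
      simp only [Set.mem_inter_iff, Set.mem_compl_iff, Set.mem_diff]
      tauto
    rw [this]
    exact (MeasurableSpace.measurableSet_generateFrom cube_mem_dyFam).diff hind
  · intro f _ hind
    rw [Set.iUnion_inter]
    exact MeasurableSet.iUnion hind

lemma m0_le : MeasurableSpace.generateFrom (dyFam n) ≤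
    (inferInstance : MeasurableSpace (Fin n → ℝ)) := by
  refine MeasurableSpace.generateFrom_le ?_
  rintro s ⟨k, m, rfl⟩
  exact measurableSet_dyQ k m

section Uniq2
variable {B : Type*} [NormedRing B] [NormedAlgebra ℝ B] [CompleteSpace B]
variable (D : Lp B 1 (cubeMeasure n) →L[ℝ] B)

/-- the indicator Lp element doesn't depend on a.e.-modification of the set -/
lemma indLp_congr {s t : Set (Fin n → ℝ)} (hs : MeasurableSet s) (ht : MeasurableSet t)
    (hμs : cubeMeasure n s ≠ ⊤) (hμt : cubeMeasure n t ≠ ⊤) (b : B)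
    (hae : ∀ᵐ x ∂(cubeMeasure n), x ∈ s ↔ x ∈ t) :
    (indicatorConstLp 1 hs hμs b : Lp B 1 (cubeMeasure n)) = indicatorConstLp 1 ht hμt b := by
  apply Lp.ext
  refine (indicatorConstLp_coeFn).trans (Filter.EventuallyEq.trans ?_
    (indicatorConstLp_coeFn).symm)
  filter_upwards [hae] with x hx
  by_cases hxs : x ∈ s
  · rw [Set.indicator_of_mem hxs, Set.indicator_of_mem (hx.1 hxs)]
  · rw [Set.indicator_of_notMem hxs, Set.indicator_of_notMem (fun hxt => hxs (hx.2 hxt))]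

lemma D_all
    (hDc : ∀ (g : Lp B 1 (cubeMeasure n)) (b : B),
      ⇑g =ᵐ[cubeMeasure n] (fun _ => b) → D g = 0)
    (hDj : ∀ (F : (Fin n → Bool) → Lp B 1 (cubeMeasure n)) (h : Lp B 1 (cubeMeasure n)),
      ⇑h =ᵐ[cubeMeasure n] juxtFun (fun σ => ⇑(F σ)) →
        D h = ((2:ℝ)^n)⁻¹ • ∑ σ : Fin n → Bool, D (F σ)) :
    ∀ (t : Set (Fin n → ℝ)) (ht : MeasurableSet t) (b : B),
      D (indicatorConstLp 1 ht (measure_ne_top _ _) b) = 0 := by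
  classical
  set C : Set (Fin n → ℝ) → Prop := fun t =>
    ∀ (ht : MeasurableSet t) (b : B),
      D (indicatorConstLp 1 ht (measure_ne_top _ _) b) = 0 with hC
  -- the property holds for all sets in the generated σ-algebra
  have claim0 : ∀ t, MeasurableSet[MeasurableSpace.generateFrom (dyFam n)] t → C t := by
    intro t htm0
    refine MeasurableSpace.induction_on_inter (m := MeasurableSpace.generateFrom (dyFam n))
      (C := fun s _ => C s) rfl isPiSystem_dyFam ?_ ?_ ?_ ?_ t htm0
    · -- empty
      intro ht b
      rw [indLp_eq_zero ht (measure_ne_top _ _) (by simp) b, map_zero]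
    · -- basic
      rintro s ⟨k, m, rfl⟩ ht b
      by_cases hall : ∀ j, m j < 2^k
      · exact D_dyQ D hDc hDj k m hall b
      · push_neg at hall
        obtain ⟨j, hj⟩ := hall
        have h0 : cubeMeasure n (dyQ k m) = 0 := by
          rw [cubeMeasure_def, Measure.restrict_apply' measurableSet_cube,
            dyQ_inter_cube_empty j hj, measure_empty]
        rw [indLp_eq_zero ht (measure_ne_top _ _) h0 b, map_zero]
    · -- complement
      intro s hsm0 hCs ht b
      have hsB : MeasurableSet s := m0_le s hsm0
      have hkey : (indicatorConstLp 1 ht (measure_ne_top _ _) b : Lp B 1 (cubeMeasure n))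
          = indicatorConstLp 1 MeasurableSet.univ (measure_ne_top _ _) b
            - indicatorConstLp 1 hsB (measure_ne_top _ _) b := by
        apply Lp.ext
        refine (indicatorConstLp_coeFn).trans ?_
        refine Filter.EventuallyEq.trans ?_ (Lp.coeFn_sub _ _).symm
        have h1 := indicatorConstLp_coeFn (μ := cubeMeasure n) (p := (1:ℝ≥0∞))
          (hs := MeasurableSet.univ (α := Fin n → ℝ)) (hμs := measure_ne_top _ _) (c := b)
        have h2 := indicatorConstLp_coeFn (μ := cubeMeasure n) (p := (1:ℝ≥0∞))
          (hs := hsB) (hμs := measure_ne_top _ _) (c := b)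
        filter_upwards [h1, h2] with x hx1 hx2
        rw [Pi.sub_apply, hx1, hx2]
        by_cases hxs : x ∈ s
        · simp [Set.indicator_of_mem hxs, Set.indicator_of_notMem (Set.notMem_compl_iff.2 hxs)]
        · simp [Set.indicator_of_notMem hxs, Set.indicator_of_mem (Set.mem_compl hxs)]
      rw [hkey, map_sub]
      rw [hCs hsB b]
      have huniv : D (indicatorConstLp 1 MeasurableSet.univ (measure_ne_top _ _) b
          : Lp B 1 (cubeMeasure n)) = 0 := by
        apply hDc _ b
        refine (indicatorConstLp_coeFn).trans ?_
        filter_upwards with x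
        simp
      rw [huniv, sub_zero]
    · -- disjoint union
      intro f hdisj hm0 hCf ht b
      have hB : ∀ i, MeasurableSet (f i) := fun i => m0_le _ (hm0 i)
      set A : ℕ → Set (Fin n → ℝ) := fun N => ⋃ (i : ℕ) (_ : i < N), f i with hA
      have hAmeas : ∀ N, MeasurableSet (A N) := fun N =>
        MeasurableSet.biUnion (Set.to_countable _) (fun i _ => hB i)
      have hAsub : ∀ N, A N ⊆ ⋃ i, f i := fun N =>
        Set.iUnion₂_subset fun i _ => Set.subset_iUnion f i
      -- partial unions vanish
      have hDA : ∀ N, D (indicatorConstLp 1 (hAmeas N) (measure_ne_top _ _) b) = 0 := by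
        intro N
        induction N with
        | zero =>
          have h0 : cubeMeasure n (A 0) = 0 := by
            have : A 0 = ∅ := by simp [hA]
            rw [this, measure_empty]
          rw [indLp_eq_zero (hAmeas 0) (measure_ne_top _ _) h0 b, map_zero]
        | succ N ihN =>
          have hstep : A (N+1) = A N ∪ f N := by
            simp only [hA]
            ext x
            simp only [Set.mem_iUnion, Set.mem_union]
            constructor
            · rintro ⟨i, hi, hx⟩
              rcases Nat.lt_or_ge i N with h | h
              · exact Or.inl ⟨i, h, hx⟩
              · have : i = N := by omega
                subst this
                exact Or.inr hx
            · rintro (⟨i, hi, hx⟩ | hx)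
              · exact ⟨i, by omega, hx⟩
              · exact ⟨N, by omega, hx⟩
          have hdisj2 : Disjoint (A N) (f N) := by
            rw [Set.disjoint_left]
            rintro x hx hxN
            simp only [hA, Set.mem_iUnion] at hx
            obtain ⟨i, hi, hx⟩ := hx
            exact Set.disjoint_left.1 (hdisj (by omega : i ≠ N)) hx hxN
          have := indicatorConstLp_disjoint_union (p := (1:ℝ≥0∞)) (μ := cubeMeasure n)
            (hAmeas N) (hB N) (measure_ne_top _ _) (measure_ne_top _ _) hdisj2 b
          have hkey : (indicatorConstLp 1 (hAmeas (N+1)) (measure_ne_top _ _) b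
              : Lp B 1 (cubeMeasure n))
              = indicatorConstLp 1 (hAmeas N) (measure_ne_top _ _) b
                + indicatorConstLp 1 (hB N) (measure_ne_top _ _) b := by
            rw [← this]
            apply indLp_congr
            filter_upwards with x
            rw [hstep]
          rw [hkey, map_add, ihN, hCf N (hB N) b, add_zero]
      -- convergence
      have hEmeas : ∀ N, MeasurableSet ((⋃ i, f i) \ A N) := fun N =>
        (MeasurableSet.iUnion hB).diff (hAmeas N)
      have hdiff : ∀ N, (indicatorConstLp 1 ht (measure_ne_top _ _) b : Lp B 1 (cubeMeasure n))
          - indicatorConstLp 1 (hAmeas N) (measure_ne_top _ _) b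
          = indicatorConstLp 1 (hEmeas N) (measure_ne_top _ _) b := by
        intro N
        apply Lp.ext
        refine Filter.EventuallyEq.trans ?_ (indicatorConstLp_coeFn).symm
        refine (Lp.coeFn_sub _ _).trans ?_
        have h1 := indicatorConstLp_coeFn (μ := cubeMeasure n) (p := (1:ℝ≥0∞))
          (hs := ht) (hμs := measure_ne_top _ _) (c := b)
        have h2 := indicatorConstLp_coeFn (μ := cubeMeasure n) (p := (1:ℝ≥0∞))
          (hs := hAmeas N) (hμs := measure_ne_top _ _) (c := b)
        filter_upwards [h1, h2] with x hx1 hx2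
        rw [Pi.sub_apply, hx1, hx2]
        by_cases hxA : x ∈ A N
        · rw [Set.indicator_of_mem hxA, Set.indicator_of_mem (hAsub N hxA),
            Set.indicator_of_notMem (fun hc => hc.2 hxA), sub_self]
        · rw [Set.indicator_of_notMem hxA, sub_zero]
          by_cases hxU : x ∈ ⋃ i, f i
          · rw [Set.indicator_of_mem hxU,
              Set.indicator_of_mem (show x ∈ (⋃ i, f i) \ A N from ⟨hxU, hxA⟩)]
          · rw [Set.indicator_of_notMem hxU, Set.indicator_of_notMem (fun hc => hxU hc.1)]
      have htend : Filter.Tendsto (fun N => cubeMeasure n ((⋃ i, f i) \ A N))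
          Filter.atTop (nhds 0) := by
        have hInter : ⋂ N, ((⋃ i, f i) \ A N) = ∅ := by
          ext x
          simp only [Set.mem_iInter, Set.mem_diff, Set.mem_empty_iff_false, iff_false]
          intro hcon
          obtain ⟨hxU, _⟩ := hcon 0
          obtain ⟨i, hi⟩ := Set.mem_iUnion.1 hxU
          exact (hcon (i+1)).2 (Set.mem_iUnion₂.2 ⟨i, Nat.lt_succ_self i, hi⟩)
        have := tendsto_measure_iInter_atTop (μ := cubeMeasure n)
          (fun N => (hEmeas N).nullMeasurableSet)
          (fun N M hNM => Set.diff_subset_diff_right (by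
            apply Set.iUnion₂_subset
            intro i hi
            apply Set.subset_iUnion₂ (s := fun i (_ : i < M) => f i) i
            omega))
          ⟨0, measure_ne_top _ _⟩
        rw [hInter, measure_empty] at this
        exact this
      have hnormtend : Filter.Tendsto
          (fun N => (indicatorConstLp 1 (hAmeas N) (measure_ne_top _ _) b
            : Lp B 1 (cubeMeasure n)))
          Filter.atTop (nhds (indicatorConstLp 1 ht (measure_ne_top _ _) b)) := by
        rw [tendsto_iff_norm_sub_tendsto_zero]
        have heq : ∀ N, ‖(indicatorConstLp 1 (hAmeas N) (measure_ne_top _ _) b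
            : Lp B 1 (cubeMeasure n)) - indicatorConstLp 1 ht (measure_ne_top _ _) b‖
            = ‖b‖ * (cubeMeasure n ((⋃ i, f i) \ A N)).toReal := by
          intro N
          rw [← norm_neg, neg_sub, hdiff N,
            norm_indicatorConstLp one_ne_zero ENNReal.one_ne_top]
          simp [measureReal_def]
        simp only [heq]
        have h2 : Filter.Tendsto (fun N => (cubeMeasure n ((⋃ i, f i) \ A N)).toReal)
            Filter.atTop (nhds 0) := by
          have := (ENNReal.tendsto_toReal (a := 0) (by simp)).comp htend
          exact this
        simpa using h2.const_mul ‖b‖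
      have hlim : Filter.Tendsto
          (fun N => D (indicatorConstLp 1 (hAmeas N) (measure_ne_top _ _) b
            : Lp B 1 (cubeMeasure n)))
          Filter.atTop (nhds (D (indicatorConstLp 1 ht (measure_ne_top _ _) b))) :=
        (D.continuous.tendsto _).comp hnormtend
      simp only [hDA] at hlim
      exact (tendsto_nhds_unique tendsto_const_nhds hlim).symm
  -- extend to all Borel sets
  intro t ht b
  have hm0 : MeasurableSet[MeasurableSpace.generateFrom (dyFam n)] (t ∩ cube n) :=
    borel_inter_cube ht
  have h1 := claim0 _ hm0 (ht.inter measurableSet_cube) b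
  have h2 : (indicatorConstLp 1 ht (measure_ne_top _ _) b : Lp B 1 (cubeMeasure n))
      = indicatorConstLp 1 (ht.inter measurableSet_cube) (measure_ne_top _ _) b := by
    apply indLp_congr
    filter_upwards [ae_mem_cube] with x hx
    exact ⟨fun h => ⟨h, hx⟩, fun h => h.1⟩
  rw [h2]
  exact h1

end Uniq2

/-- the Bochner integral `T(f) = ∫ f` is a continuous ℝ-linear map
`L¹([0,1)^n; B) → B` which is right `B`-linear, sends the constant function `1_B` to
`1_B`, intertwines the juxtaposition with the average `2^{-n} ∑`, and is the unique
continuous ℝ-linear map with these three properties. -/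
theorem bochner_integral_unique_morphism
    (n : ℕ) (hn : 1 ≤ n)
    (B : Type*) [NormedRing B] [NormedAlgebra ℝ B] [CompleteSpace B] :
    ∃ T : Lp B 1 (cubeMeasure n) →L[ℝ] B,
      (∀ f : Lp B 1 (cubeMeasure n), T f = ∫ x, f x ∂(cubeMeasure n)) ∧
      -- (i) right B-linearity
      (∀ (f g : Lp B 1 (cubeMeasure n)) (b : B),
        ⇑g =ᵐ[cubeMeasure n] (fun x => f x * b) → T g = T f * b) ∧
      -- (ii) normalization
      (∀ one : Lp B 1 (cubeMeasure n),
        ⇑one =ᵐ[cubeMeasure n] (fun _ => (1 : B)) → T one = 1) ∧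
      -- (iii) juxtaposition goes to the average
      (∀ (F : (Fin n → Bool) → Lp B 1 (cubeMeasure n)) (h : Lp B 1 (cubeMeasure n)),
        ⇑h =ᵐ[cubeMeasure n] juxtFun (fun σ => ⇑(F σ)) →
          T h = ((2 : ℝ) ^ n)⁻¹ • ∑ σ : Fin n → Bool, T (F σ)) ∧
      -- uniqueness: any continuous ℝ-linear map satisfying (i), (ii), (iii) equals T
      (∀ S : Lp B 1 (cubeMeasure n) →L[ℝ] B,
        ((∀ (f g : Lp B 1 (cubeMeasure n)) (b : B),
            ⇑g =ᵐ[cubeMeasure n] (fun x => f x * b) → S g = S f * b) ∧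
          (∀ one : Lp B 1 (cubeMeasure n),
            ⇑one =ᵐ[cubeMeasure n] (fun _ => (1 : B)) → S one = 1) ∧
          (∀ (F : (Fin n → Bool) → Lp B 1 (cubeMeasure n)) (h : Lp B 1 (cubeMeasure n)),
            ⇑h =ᵐ[cubeMeasure n] juxtFun (fun σ => ⇑(F σ)) →
              S h = ((2 : ℝ) ^ n)⁻¹ • ∑ σ : Fin n → Bool, S (F σ))) →
          S = T) := by
  refine ⟨L1.integralCLM, fun f => T_eq f, fun f g b h => T_prop1 f g b h,
    fun one h => T_prop2 one h, fun F h hh => T_prop3 F h hh, ?_⟩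
  rintro S ⟨hS1, hS2, hS3⟩
  set T : Lp B 1 (cubeMeasure n) →L[ℝ] B := L1.integralCLM with hT
  set D : Lp B 1 (cubeMeasure n) →L[ℝ] B := S - T with hD
  -- the "one" element
  set one : Lp B 1 (cubeMeasure n) :=
    indicatorConstLp 1 MeasurableSet.univ (measure_ne_top _ _) (1:B) with honedef
  have hone : ⇑one =ᵐ[cubeMeasure n] (fun _ => (1:B)) := by
    refine (indicatorConstLp_coeFn).trans ?_
    filter_upwards with x
    simp
  have hDc : ∀ (g : Lp B 1 (cubeMeasure n)) (b : B),
      ⇑g =ᵐ[cubeMeasure n] (fun _ => b) → D g = 0 := by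
    intro g b hg
    have hgb : ⇑g =ᵐ[cubeMeasure n] (fun x => one x * b) := by
      refine hg.trans ?_
      filter_upwards [hone] with x hx
      rw [hx, one_mul]
    rw [hD, ContinuousLinearMap.sub_apply, hS1 one g b hgb, T_prop1 one g b hgb,
      hS2 one hone, T_prop2 one hone, sub_self]
  have hDj : ∀ (F : (Fin n → Bool) → Lp B 1 (cubeMeasure n)) (h : Lp B 1 (cubeMeasure n)),
      ⇑h =ᵐ[cubeMeasure n] juxtFun (fun σ => ⇑(F σ)) →
        D h = ((2:ℝ)^n)⁻¹ • ∑ σ : Fin n → Bool, D (F σ) := by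
    intro F h hh
    rw [hD, ContinuousLinearMap.sub_apply, hS3 F h hh, T_prop3 F h hh, ← smul_sub,
      ← Finset.sum_sub_distrib]
    simp only [ContinuousLinearMap.sub_apply]
    rfl
  have hD0 : ∀ f : Lp B 1 (cubeMeasure n), D f = 0 := by
    refine Lp.induction ENNReal.one_ne_top (fun f => D f = 0) ?_ ?_ ?_
    · intro c s hs hμs
      rw [Lp.simpleFunc.coe_indicatorConst]
      exact D_all D hDc hDj s hs c
    · intro f g hf hg hfg hPf hPg
      rw [map_add, hPf, hPg, add_zero]
    · exact isClosed_eq D.continuous continuous_const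
  ext f
  have := hD0 f
  rw [hD, ContinuousLinearMap.sub_apply, sub_eq_zero] at this
  exact this
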